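/- A permutation π of [n] with n ≥ 1 is separable if and only if n = 1, or π can be written as a direct sum or a skew sum of two nonempty separable permutations. (Direct sum: there is 1 ≤ k < n such that π maps [1,k] onto [1,k] and the restrictions to [1,k] and [k+1,n] are order-isomorphic to separable permutations; skew sum: there is 1 ≤ k < n such that π maps [1,k] onto [n−k+1,n] and both restricted patterns are separable.) -/

import Mathlib

/-- `π` is a permutation of `[n] = {1,…,n}`. -/
def IsPermOn (n : ℕ) (π : ℕ → ℕ) : Prop :=
  Set.BijOn π (Set.Icc 1 n) (Set.Icc 1 n)

/-- `π` (a map on `{1,…,n}`) is a Baxter permutation: it avoids the vincular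
patterns 2-41-3 and 3-14-2. -/
def IsBaxter (n : ℕ) (π : ℕ → ℕ) : Prop :=
  ∀ i j k : ℕ, 1 ≤ i → i < j → j < k → k ≤ n →
    ¬(π (j + 1) < π i ∧ π i < π k ∧ π k < π j) ∧
    ¬(π j < π k ∧ π k < π i ∧ π i < π (j + 1))

/-- `π` (a map on `{1,…,n}`) is a separable permutation: it avoids the classical
patterns 2413 and 3142. -/
def IsSeparablePerm (n : ℕ) (π : ℕ → ℕ) : Prop :=
  ∀ i1 i2 i3 i4 : ℕ, 1 ≤ i1 → i1 < i2 → i2 < i3 → i3 < i4 → i4 ≤ n →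
    ¬(π i3 < π i1 ∧ π i1 < π i4 ∧ π i4 < π i2) ∧
    ¬(π i2 < π i4 ∧ π i4 < π i1 ∧ π i1 < π i3)

/-- A permutation of [n] (n ≥ 1) is separable iff n = 1 or it is a direct sum
or a skew sum of two nonempty separable permutations. -/
lemma perm_val {n : ℕ} {π : ℕ → ℕ} (h : IsPermOn n π) {i : ℕ} (h1 : 1 ≤ i) (h2 : i ≤ n) :
    1 ≤ π i ∧ π i ≤ n := by
  have := h.1 (Set.mem_Icc.mpr ⟨h1, h2⟩); simpa [Set.mem_Icc] using this

lemma perm_inj {n : ℕ} {π : ℕ → ℕ} (h : IsPermOn n π) {a b : ℕ} (ha1 : 1 ≤ a) (ha2 : a ≤ n)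
    (hb1 : 1 ≤ b) (hb2 : b ≤ n) (hab : π a = π b) : a = b :=
  h.2.1 (Set.mem_Icc.mpr ⟨ha1, ha2⟩) (Set.mem_Icc.mpr ⟨hb1, hb2⟩) hab

lemma card_pos_ge (n c : ℕ) (π : ℕ → ℕ) (h : IsPermOn n π) :
    ((Finset.Icc 1 n).filter (fun j => c + 1 ≤ π j)).card = n - c := by
  have e : ((Finset.Icc 1 n).filter (fun j => c + 1 ≤ π j)).card = (Finset.Icc (c+1) n).card := by
    apply Finset.card_nbij π
    · intro a ha
      simp only [Finset.coe_filter, Set.mem_setOf_eq, Finset.coe_Icc, Set.mem_Icc, Finset.mem_filter, Finset.mem_Icc] at ha ⊢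
      exact ⟨ha.2, (perm_val h ha.1.1 ha.1.2).2⟩
    · intro a ha b hb hab
      simp only [Finset.coe_filter, Set.mem_setOf_eq, Finset.mem_Icc] at ha hb
      exact perm_inj h ha.1.1 ha.1.2 hb.1.1 hb.1.2 hab
    · intro v hv
      simp only [Finset.coe_Icc, Set.mem_Icc] at hv
      obtain ⟨j, hj, he⟩ := h.2.2 (Set.mem_Icc.mpr ⟨by omega, hv.2⟩)
      simp only [Set.mem_Icc] at hj
      refine ⟨j, ?_, he⟩
      simp only [Finset.coe_filter, Set.mem_setOf_eq, Finset.mem_Icc]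
      exact ⟨⟨hj.1, hj.2⟩, by omega⟩
  rw [e, Nat.card_Icc]; omega

lemma card_pos_le (n c : ℕ) (π : ℕ → ℕ) (h : IsPermOn n π) (hc : c ≤ n) :
    ((Finset.Icc 1 n).filter (fun j => π j ≤ c)).card = c := by
  have e : ((Finset.Icc 1 n).filter (fun j => π j ≤ c)).card = (Finset.Icc 1 c).card := by
    apply Finset.card_nbij π
    · intro a ha
      simp only [Finset.coe_filter, Set.mem_setOf_eq, Finset.coe_Icc, Set.mem_Icc, Finset.mem_filter, Finset.mem_Icc] at ha ⊢
      exact ⟨(perm_val h ha.1.1 ha.1.2).1, ha.2⟩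
    · intro a ha b hb hab
      simp only [Finset.coe_filter, Set.mem_setOf_eq, Finset.mem_Icc] at ha hb
      exact perm_inj h ha.1.1 ha.1.2 hb.1.1 hb.1.2 hab
    · intro v hv
      simp only [Finset.coe_Icc, Set.mem_Icc] at hv
      obtain ⟨j, hj, he⟩ := h.2.2 (Set.mem_Icc.mpr ⟨hv.1, by omega⟩)
      simp only [Set.mem_Icc] at hj
      refine ⟨j, ?_, he⟩
      simp only [Finset.coe_filter, Set.mem_setOf_eq, Finset.mem_Icc]
      exact ⟨⟨hj.1, hj.2⟩, by omega⟩
  rw [e, Nat.card_Icc]; omega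

lemma cross_asc (n k : ℕ) (π : ℕ → ℕ) (hperm : IsPermOn n π) (hk1 : 1 ≤ k) (hkn : k < n)
    (hns : ¬ ∀ i ∈ Set.Icc 1 k, π i ∈ Set.Icc (n - k + 1) n) :
    ∃ i j, 1 ≤ i ∧ i ≤ k ∧ k < j ∧ j ≤ n ∧ π i < π j := by
  push_neg at hns
  obtain ⟨i0, hi0, hv⟩ := hns
  simp only [Set.mem_Icc] at hi0 hv
  have hi0n : i0 ≤ n := le_trans hi0.2 (le_of_lt hkn)
  have hb := perm_val hperm hi0.1 hi0n
  have hv' : π i0 ≤ n - k := by omega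
  by_contra hcon
  push_neg at hcon
  set S := (Finset.Icc 1 n).filter (fun j => (n - k) + 1 ≤ π j) with hS
  have hcard : S.card = n - (n - k) := card_pos_ge n (n-k) π hperm
  have hsub : S ⊆ Finset.Icc 1 k := by
    intro j hj
    simp only [hS, Finset.mem_filter, Finset.mem_Icc] at hj ⊢
    refine ⟨hj.1.1, ?_⟩
    by_contra hgt
    push_neg at hgt
    have := hcon i0 j hi0.1 hi0.2 hgt hj.1.2
    omega
  have hEq : S = Finset.Icc 1 k := by
    apply Finset.eq_of_subset_of_card_le hsub
    rw [hcard, Nat.card_Icc]; omega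
  have : i0 ∈ S := by rw [hEq]; exact Finset.mem_Icc.mpr ⟨hi0.1, hi0.2⟩
  simp only [hS, Finset.mem_filter] at this
  omega

lemma cross_desc (n k : ℕ) (π : ℕ → ℕ) (hperm : IsPermOn n π) (hk1 : 1 ≤ k) (hkn : k < n)
    (hns : ¬ ∀ i ∈ Set.Icc 1 k, π i ∈ Set.Icc 1 k) :
    ∃ i j, 1 ≤ i ∧ i ≤ k ∧ k < j ∧ j ≤ n ∧ π j < π i := by
  push_neg at hns
  obtain ⟨i0, hi0, hv⟩ := hns
  simp only [Set.mem_Icc] at hi0 hv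
  have hi0n : i0 ≤ n := le_trans hi0.2 (le_of_lt hkn)
  have hb := perm_val hperm hi0.1 hi0n
  have hv' : k + 1 ≤ π i0 := by omega
  by_contra hcon
  push_neg at hcon
  set S := (Finset.Icc 1 n).filter (fun j => π j ≤ k) with hS
  have hcard : S.card = k := card_pos_le n k π hperm (by omega)
  have hsub : S ⊆ Finset.Icc 1 k := by
    intro j hj
    simp only [hS, Finset.mem_filter, Finset.mem_Icc] at hj ⊢
    refine ⟨hj.1.1, ?_⟩
    by_contra hgt
    push_neg at hgt
    have := hcon i0 j hi0.1 hi0.2 hgt hj.1.2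
    omega
  have hEq : S = Finset.Icc 1 k := by
    apply Finset.eq_of_subset_of_card_le hsub
    rw [hcard, Nat.card_Icc]; omega
  have : i0 ∈ S := by rw [hEq]; exact Finset.mem_Icc.mpr ⟨hi0.1, hi0.2⟩
  simp only [hS, Finset.mem_filter] at this
  omega

lemma plus_compl (n k : ℕ) (π : ℕ → ℕ) (hperm : IsPermOn n π) (hkn : k ≤ n)
    (hcut : ∀ i ∈ Set.Icc 1 k, π i ∈ Set.Icc 1 k) :
    ∀ i, k < i → i ≤ n → k + 1 ≤ π i := by
  intro i hki hin
  by_contra h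
  push_neg at h
  set S := (Finset.Icc 1 n).filter (fun j => π j ≤ k) with hS
  have hcard : S.card = k := card_pos_le n k π hperm hkn
  have hsub : Finset.Icc 1 k ⊆ S := by
    intro j hj
    simp only [Finset.mem_Icc] at hj
    have := hcut j (Set.mem_Icc.mpr hj)
    simp only [Set.mem_Icc] at this
    simp only [hS, Finset.mem_filter, Finset.mem_Icc]
    exact ⟨⟨hj.1, by omega⟩, this.2⟩
  have hEq : Finset.Icc 1 k = S := by
    apply Finset.eq_of_subset_of_card_le hsub
    rw [hcard, Nat.card_Icc]; omega
  have : i ∈ S := by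
    simp only [hS, Finset.mem_filter, Finset.mem_Icc]
    exact ⟨⟨by omega, hin⟩, by omega⟩
  rw [← hEq] at this
  simp only [Finset.mem_Icc] at this
  omega

lemma skew_compl (n k : ℕ) (π : ℕ → ℕ) (hperm : IsPermOn n π) (hkn : k ≤ n)
    (hcut : ∀ i ∈ Set.Icc 1 k, π i ∈ Set.Icc (n - k + 1) n) :
    ∀ i, k < i → i ≤ n → π i ≤ n - k := by
  intro i hki hin
  by_contra h
  push_neg at h
  set S := (Finset.Icc 1 n).filter (fun j => (n - k) + 1 ≤ π j) with hS
  have hcard : S.card = n - (n - k) := card_pos_ge n (n - k) π hperm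
  have hsub : Finset.Icc 1 k ⊆ S := by
    intro j hj
    simp only [Finset.mem_Icc] at hj
    have := hcut j (Set.mem_Icc.mpr hj)
    simp only [Set.mem_Icc] at this
    simp only [hS, Finset.mem_filter, Finset.mem_Icc]
    exact ⟨⟨hj.1, by omega⟩, by omega⟩
  have hEq : Finset.Icc 1 k = S := by
    apply Finset.eq_of_subset_of_card_le hsub
    rw [hcard, Nat.card_Icc]; omega
  have : i ∈ S := by
    simp only [hS, Finset.mem_filter, Finset.mem_Icc]
    exact ⟨⟨by omega, hin⟩, by omega⟩
  rw [← hEq] at this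
  simp only [Finset.mem_Icc] at this
  omega

lemma sep_mono {n : ℕ} {π : ℕ → ℕ} (sep : IsSeparablePerm n π) {m : ℕ} (h : m ≤ n) :
    IsSeparablePerm m π :=
  fun i1 i2 i3 i4 a b c d e => sep i1 i2 i3 i4 a b c d (e.trans h)

lemma sep_transfer {m : ℕ} {f g : ℕ → ℕ}
    (h : ∀ a b, 1 ≤ a → a ≤ m → 1 ≤ b → b ≤ m → (g a < g b ↔ f a < f b))
    (sep : IsSeparablePerm m f) : IsSeparablePerm m g := by
  intro i1 i2 i3 i4 h1 h12 h23 h34 h4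
  have hs := sep i1 i2 i3 i4 h1 h12 h23 h34 h4
  constructor
  · rintro ⟨a, b, c⟩
    exact hs.1 ⟨(h i3 i1 (by omega) (by omega) (by omega) (by omega)).mp a,
      (h i1 i4 (by omega) (by omega) (by omega) (by omega)).mp b,
      (h i4 i2 (by omega) (by omega) (by omega) (by omega)).mp c⟩
  · rintro ⟨a, b, c⟩
    exact hs.2 ⟨(h i2 i4 (by omega) (by omega) (by omega) (by omega)).mp a,
      (h i4 i1 (by omega) (by omega) (by omega) (by omega)).mp b,
      (h i1 i3 (by omega) (by omega) (by omega) (by omega)).mp c⟩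

lemma sep_shift {n k : ℕ} {π : ℕ → ℕ} (sep : IsSeparablePerm n π) (hk : k ≤ n) :
    IsSeparablePerm (n - k) (fun j => π (k + j)) := by
  intro j1 j2 j3 j4 h1 h12 h23 h34 h4
  exact sep (k+j1) (k+j2) (k+j3) (k+j4) (by omega) (by omega) (by omega) (by omega) (by omega)

lemma core (n : ℕ) (π : ℕ → ℕ) (hn : 2 ≤ n) (hperm : IsPermOn n π)
    (sep : IsSeparablePerm n π) (p q : ℕ)
    (hp1 : 1 ≤ p) (hpn : p ≤ n) (hq1 : 1 ≤ q) (hqn : q ≤ n)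
    (hp : π p = n) (hq : π q = 1) (hpq : p < q)
    (noskew : ∀ k, 1 ≤ k → k < n → ¬ ∀ i ∈ Set.Icc 1 k, π i ∈ Set.Icc (n - k + 1) n) :
    False := by
  classical
  have hval : ∀ i, 1 ≤ i → i ≤ n → 1 ≤ π i ∧ π i ≤ n := fun i a b => perm_val hperm a b
  have hinj : ∀ a b, 1 ≤ a → a ≤ n → 1 ≤ b → b ≤ n → π a = π b → a = b :=
    fun a b a1 a2 b1 b2 e => perm_inj hperm a1 a2 b1 b2 e
  -- p ≥ 2
  have hp2 : 2 ≤ p := by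
    by_contra h
    have hp1' : p = 1 := by omega
    obtain ⟨i, j, hi1, hik, hkj, hjn, hij⟩ :=
      cross_asc n 1 π hperm le_rfl (by omega) (noskew 1 (by omega) (by omega))
    have hi : i = 1 := by omega
    have h2 := hval j (by omega) hjn
    rw [hi, ← hp1', hp] at hij
    omega
  -- q < n
  have hqn' : q < n := by
    by_contra h
    have hq' : q = n := by omega
    obtain ⟨i, j, hi1, hik, hkj, hjn, hij⟩ :=
      cross_asc n (n-1) π hperm (by omega) (by omega) (noskew (n-1) (by omega) (by omega))
    have hj : j = n := by omega
    have h2 := hval i hi1 (by omega)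
    rw [hj, ← hq', hq] at hij
    omega
  -- H
  have H : ∀ i j, 1 ≤ i → i < p → q < j → j ≤ n → π j < π i := by
    intro i j h1 h2 h3 h4
    by_contra hcon
    push_neg at hcon
    have hiq : i ≠ q := by omega
    have hjp : j ≠ p := by omega
    have hvi := hval i h1 (by omega)
    have hvj := hval j (by omega) h4
    have hne : π i ≠ π j := fun e => by have := hinj i j h1 (by omega) (by omega) h4 e; omega
    have hne1 : π i ≠ 1 := fun e => by
      have := hinj i q h1 (by omega) hq1 hqn (by rw [e, hq]); omega
    have hnen : π j ≠ n := fun e => by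
      have := hinj j p (by omega) h4 hp1 hpn (by rw [e, hp]); omega
    have hs := (sep i p q j h1 (by omega) (by omega) (by omega) h4).1
    rw [hp, hq] at hs
    omega
  -- Hmid exists
  obtain ⟨i1, m1, hi11, hi1p, hpm1, hm1n, hi1m1⟩ :=
    cross_asc n p π hperm hp1 (by omega) (noskew p hp1 (by omega))
  have hi1p' : i1 < p := by
    rcases eq_or_lt_of_le hi1p with h | h
    · exfalso; rw [h, hp] at hi1m1; have := hval m1 (by omega) hm1n; omega
    · exact h
  have hm1q : m1 < q := by
    have hne : m1 ≠ q := fun e => by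
      rw [e, hq] at hi1m1; have := hval i1 hi11 (by omega); omega
    by_contra h
    push_neg at h
    have : q < m1 := by omega
    have := H i1 m1 hi11 hi1p' this hm1n
    omega
  -- Lmid exists
  obtain ⟨m2, x2, hm21, hm2k, hkx2, hx2n, hm2x2⟩ :=
    cross_asc n (q-1) π hperm (by omega) (by omega) (noskew (q-1) (by omega) (by omega))
  have hqx2 : q < x2 := by
    have hne : x2 ≠ q := fun e => by
      rw [e, hq] at hm2x2; have := hval m2 hm21 (by omega); omega
    omega
  have hpm2 : p < m2 := by
    have hne : m2 ≠ p := fun e => by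
      rw [e, hp] at hm2x2; have := hval x2 (by omega) hx2n; omega
    by_contra h
    push_neg at h
    have : m2 < p := by omega
    have := H m2 x2 hm21 this hqx2 hx2n
    omega
  have hm2q : m2 < q := by omega
  -- Hmid finset
  set Mid : Finset ℕ := (Finset.Ioo p q).filter (fun m => ∃ i, 1 ≤ i ∧ i < p ∧ π i < π m)
    with hMid
  have hm1Mid : m1 ∈ Mid := by
    simp only [hMid, Finset.mem_filter, Finset.mem_Ioo]
    exact ⟨⟨hpm1, hm1q⟩, i1, hi11, hi1p', hi1m1⟩
  by_cases hcase : ∀ a ∈ Mid, ∀ b, p < b → b < q → (∃ x, q < x ∧ x ≤ n ∧ π b < π x) → a < b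
  · -- all Hmid before all Lmid
    have hne : Mid.Nonempty := ⟨m1, hm1Mid⟩
    set h := Mid.max' hne with hh
    have hhMid : h ∈ Mid := Mid.max'_mem hne
    have hhMid' := hhMid
    simp only [hMid, Finset.mem_filter, Finset.mem_Ioo] at hhMid'
    obtain ⟨⟨hhp, hhq⟩, iw, hiw1, hiwp, hiwlt⟩ := hhMid'
    obtain ⟨u, v, hu1, huh, hhv, hvn, huv⟩ :=
      cross_asc n h π hperm (by omega) (by omega) (noskew h (by omega) (by omega))
    have hvq : v ≠ q := fun e => by
      rw [e, hq] at huv; have := hval u hu1 (by omega); omega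
    have hvq2 : v < q := by
      by_contra hge
      push_neg at hge
      have hqv : q < v := by omega
      have hupn : ¬ u < p := fun h' => by have := H u v hu1 h' hqv hvn; omega
      have hune : u ≠ p := fun e => by
        rw [e, hp] at huv; have := hval v (by omega) hvn; omega
      have hup' : p < u := by omega
      have := hcase h hhMid u hup' (by omega) ⟨v, hqv, hvn, huv⟩
      omega
    have hvnotH : ∀ i, 1 ≤ i → i < p → π v < π i := by
      intro i hi1' hip
      have hvnot : v ∉ Mid := fun hm => by have := Mid.le_max' v hm; omega
      have hno : ¬ ∃ i, 1 ≤ i ∧ i < p ∧ π i < π v := by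
        intro hex
        exact hvnot (by
          simp only [hMid, Finset.mem_filter, Finset.mem_Ioo]
          exact ⟨⟨by omega, hvq2⟩, hex⟩)
      push_neg at hno
      have h1 := hno i hi1' hip
      have hnev : π i ≠ π v := fun e => by
        have := hinj i v hi1' (by omega) (by omega) (by omega) e; omega
      omega
    have hup : p < u := by
      have h1 : ¬ u < p := fun h' => by have := hvnotH u hu1 h'; omega
      have h2 : u ≠ p := fun e => by
        rw [e, hp] at huv; have := hval v (by omega) hvn; omega
      omega
    have huh' : u < h := by
      rcases eq_or_lt_of_le huh with h' | h'
      · exfalso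
        have := hvnotH iw hiw1 hiwp
        rw [h'] at huv
        omega
      · exact h'
    have hs := (sep iw u h v hiw1 (by omega) huh' hhv (by omega)).2
    exact hs ⟨huv, hvnotH iw hiw1 hiwp, hiwlt⟩
  · push_neg at hcase
    obtain ⟨a, haMid, b, hbp, hbq, ⟨x, hqx, hxn, hbx⟩, hba⟩ := hcase
    have haMid' := haMid
    simp only [hMid, Finset.mem_filter, Finset.mem_Ioo] at haMid'
    obtain ⟨⟨hap, haq⟩, i, hi1', hip, hia⟩ := haMid'
    have hHix : π x < π i := H i x hi1' hip hqx hxn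
    have hab : b ≠ a := fun e => by rw [e] at hbx; omega
    have hba' : b < a := by omega
    have hs := (sep i p b a hi1' hip (by omega) (by omega) (by omega)).1
    rw [hp] at hs
    have hanen : π a ≠ n := fun e => by
      have := hinj a p (by omega) (by omega) hp1 hpn (by rw [e, hp]); omega
    have hva := hval a (by omega) (by omega)
    exact hs ⟨by omega, hia, by omega⟩

lemma perm_compl {n : ℕ} {π : ℕ → ℕ} (h : IsPermOn n π) :
    IsPermOn n (fun i => n + 1 - π i) := by
  refine ⟨?_, ?_, ?_⟩
  · intro i hi
    simp only [Set.mem_Icc] at hi ⊢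
    have := perm_val h hi.1 hi.2
    omega
  · intro a ha b hb e
    simp only [Set.mem_Icc] at ha hb
    simp only at e
    have va := perm_val h ha.1 ha.2
    have vb := perm_val h hb.1 hb.2
    exact perm_inj h ha.1 ha.2 hb.1 hb.2 (by omega)
  · intro v hv
    simp only [Set.mem_Icc] at hv
    have hmem : n + 1 - v ∈ Set.Icc 1 n := Set.mem_Icc.mpr ⟨by omega, by omega⟩
    obtain ⟨j, hj, he⟩ := h.2.2 hmem
    simp only [Set.mem_Icc] at hj
    refine ⟨j, Set.mem_Icc.mpr hj, ?_⟩
    simp only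
    omega

lemma sep_compl {n : ℕ} {π : ℕ → ℕ} (h : IsPermOn n π) (sep : IsSeparablePerm n π) :
    IsSeparablePerm n (fun i => n + 1 - π i) := by
  intro i1 i2 i3 i4 h1 h12 h23 h34 h4
  have hs := sep i1 i2 i3 i4 h1 h12 h23 h34 h4
  have v1 := perm_val h (by omega : 1 ≤ i1) (by omega)
  have v2 := perm_val h (by omega : 1 ≤ i2) (by omega)
  have v3 := perm_val h (by omega : 1 ≤ i3) (by omega)
  have v4 := perm_val h (by omega : 1 ≤ i4) (by omega)
  simp only
  constructor
  · rintro ⟨a, b, c⟩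
    exact hs.2 ⟨by omega, by omega, by omega⟩
  · rintro ⟨a, b, c⟩
    exact hs.1 ⟨by omega, by omega, by omega⟩


theorem stmt13 (n : ℕ) (π : ℕ → ℕ) (hn : 1 ≤ n) (hperm : IsPermOn n π) :
    IsSeparablePerm n π ↔
      (n = 1 ∨
       (∃ k, 1 ≤ k ∧ k < n ∧ (∀ i ∈ Set.Icc 1 k, π i ∈ Set.Icc 1 k) ∧
          IsSeparablePerm k π ∧ IsSeparablePerm (n - k) (fun j => π (k + j) - k)) ∨
       (∃ k, 1 ≤ k ∧ k < n ∧
          (∀ i ∈ Set.Icc 1 k, π i ∈ Set.Icc (n - k + 1) n) ∧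
          IsSeparablePerm k (fun i => π i - (n - k)) ∧
          IsSeparablePerm (n - k) (fun j => π (k + j)))) := by
  constructor
  · intro hsep
    by_cases h1 : n = 1
    · exact Or.inl h1
    have hn2 : 2 ≤ n := by omega
    by_cases hplus : ∃ k, 1 ≤ k ∧ k < n ∧ ∀ i ∈ Set.Icc 1 k, π i ∈ Set.Icc 1 k
    · obtain ⟨k, hk1, hkn, hcut⟩ := hplus
      refine Or.inr (Or.inl ⟨k, hk1, hkn, hcut, sep_mono hsep (le_of_lt hkn), ?_⟩)
      have hcompl := plus_compl n k π hperm (by omega) hcut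
      refine sep_transfer (f := fun j => π (k + j)) ?_ (sep_shift hsep (by omega))
      intro a b ha1 ham hb1 hbm
      have va := hcompl (k + a) (by omega) (by omega)
      have vb := hcompl (k + b) (by omega) (by omega)
      omega
    by_cases hskew : ∃ k, 1 ≤ k ∧ k < n ∧ ∀ i ∈ Set.Icc 1 k, π i ∈ Set.Icc (n - k + 1) n
    · obtain ⟨k, hk1, hkn, hcut⟩ := hskew
      refine Or.inr (Or.inr ⟨k, hk1, hkn, hcut, ?_, sep_shift hsep (by omega)⟩)
      refine sep_transfer (f := π) ?_ (sep_mono hsep (le_of_lt hkn))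
      intro a b ha1 ham hb1 hbm
      have va := hcut a (Set.mem_Icc.mpr ⟨ha1, ham⟩)
      have vb := hcut b (Set.mem_Icc.mpr ⟨hb1, hbm⟩)
      simp only [Set.mem_Icc] at va vb
      omega
    · exfalso
      obtain ⟨p, hpmem, hp⟩ := hperm.2.2 (Set.mem_Icc.mpr ⟨hn, le_rfl⟩ : n ∈ Set.Icc 1 n)
      obtain ⟨q, hqmem, hq⟩ := hperm.2.2 (Set.mem_Icc.mpr ⟨le_rfl, hn⟩ : 1 ∈ Set.Icc 1 n)
      simp only [Set.mem_Icc] at hpmem hqmem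
      have hnoskew : ∀ k, 1 ≤ k → k < n → ¬ ∀ i ∈ Set.Icc 1 k, π i ∈ Set.Icc (n - k + 1) n :=
        fun k a b c => hskew ⟨k, a, b, c⟩
      have hnoplus : ∀ k, 1 ≤ k → k < n → ¬ ∀ i ∈ Set.Icc 1 k, π i ∈ Set.Icc 1 k :=
        fun k a b c => hplus ⟨k, a, b, c⟩
      have hpq : p ≠ q := by
        intro e
        rw [e, hq] at hp
        omega
      rcases lt_or_gt_of_ne hpq with h | h
      · exact core n π hn2 hperm hsep p q hpmem.1 hpmem.2 hqmem.1 hqmem.2 hp hq h hnoskew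
      · -- complement
        set σ : ℕ → ℕ := fun i => n + 1 - π i with hσ
        have hpermσ : IsPermOn n σ := perm_compl hperm
        have hsepσ : IsSeparablePerm n σ := sep_compl hperm hsep
        have hσq : σ q = n := by simp only [hσ, hq]; omega
        have hσp : σ p = 1 := by simp only [hσ, hp]; omega
        have hnoskewσ : ∀ k, 1 ≤ k → k < n → ¬ ∀ i ∈ Set.Icc 1 k, σ i ∈ Set.Icc (n - k + 1) n := by
          intro k hk1 hkn hcut
          apply hnoplus k hk1 hkn
          intro i hi
          simp only [Set.mem_Icc] at hi ⊢
          have hv := perm_val hperm hi.1 (by omega)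
          have := hcut i (Set.mem_Icc.mpr hi)
          simp only [hσ, Set.mem_Icc] at this
          omega
        exact core n σ hn2 hpermσ hsepσ q p hqmem.1 hqmem.2 hpmem.1 hpmem.2 hσq hσp h hnoskewσ
  · rintro (h1 | ⟨k, hk1, hkn, hcut, sep1, sep2⟩ | ⟨k, hk1, hkn, hcut, sep1, sep2⟩)
    · intro i1 i2 i3 i4 a b c d e
      omega
    · -- plus
      intro i1 i2 i3 i4 h1 h12 h23 h34 h4
      have hcompl := plus_compl n k π hperm (by omega) hcut
      have hlow : ∀ i, 1 ≤ i → i ≤ k → π i ≤ k := by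
        intro i a b
        have := hcut i (Set.mem_Icc.mpr ⟨a, b⟩)
        simp only [Set.mem_Icc] at this
        exact this.2
      rcases le_or_gt i4 k with hc | hc
      · exact sep1 i1 i2 i3 i4 h1 h12 h23 h34 hc
      rcases le_or_gt i1 k with hc1 | hc1
      · -- mixed
        have B : ∀ t, 1 ≤ t → t ≤ n → (t ≤ k → π t ≤ k) ∧ (k < t → k + 1 ≤ π t) := by
          intro t a b
          exact ⟨fun h' => hlow t a h', fun h' => hcompl t h' b⟩
        have g1 := B i1 (by omega) (by omega)
        have g2 := B i2 (by omega) (by omega)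
        have g3 := B i3 (by omega) (by omega)
        have g4 := B i4 (by omega) (by omega)
        constructor <;> (rintro ⟨a, b, c⟩) <;> omega
      · -- all in second block
        have e1 : k + (i1 - k) = i1 := by omega
        have e2 : k + (i2 - k) = i2 := by omega
        have e3 : k + (i3 - k) = i3 := by omega
        have e4 : k + (i4 - k) = i4 := by omega
        have hs := sep2 (i1 - k) (i2 - k) (i3 - k) (i4 - k)
          (by omega) (by omega) (by omega) (by omega) (by omega)
        simp only [e1, e2, e3, e4] at hs
        have v1 := hcompl i1 hc1 (by omega)
        have v2 := hcompl i2 (by omega) (by omega)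
        have v3 := hcompl i3 (by omega) (by omega)
        have v4 := hcompl i4 (by omega) (by omega)
        constructor
        · rintro ⟨a, b, c⟩
          exact hs.1 ⟨by omega, by omega, by omega⟩
        · rintro ⟨a, b, c⟩
          exact hs.2 ⟨by omega, by omega, by omega⟩
    · -- skew
      intro i1 i2 i3 i4 h1 h12 h23 h34 h4
      have hcompl := skew_compl n k π hperm (by omega) hcut
      have hhigh : ∀ i, 1 ≤ i → i ≤ k → n - k + 1 ≤ π i ∧ π i ≤ n := by
        intro i a b
        have := hcut i (Set.mem_Icc.mpr ⟨a, b⟩)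
        simp only [Set.mem_Icc] at this
        exact this
      rcases le_or_gt i4 k with hc | hc
      · -- all in first block
        have hs := sep1 i1 i2 i3 i4 h1 h12 h23 h34 hc
        simp only at hs
        have v1 := hhigh i1 (by omega) (by omega)
        have v2 := hhigh i2 (by omega) (by omega)
        have v3 := hhigh i3 (by omega) (by omega)
        have v4 := hhigh i4 (by omega) (by omega)
        constructor
        · rintro ⟨a, b, c⟩
          exact hs.1 ⟨by omega, by omega, by omega⟩
        · rintro ⟨a, b, c⟩
          exact hs.2 ⟨by omega, by omega, by omega⟩
      rcases le_or_gt i1 k with hc1 | hc1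
      · -- mixed
        have g1 : i1 ≤ k → n - k + 1 ≤ π i1 := fun h' => (hhigh i1 (by omega) h').1
        have g2 : ∀ t, 1 ≤ t → t ≤ n → (t ≤ k → n - k + 1 ≤ π t) ∧ (k < t → π t ≤ n - k) := by
          intro t a b
          exact ⟨fun h' => (hhigh t a h').1, fun h' => hcompl t h' b⟩
        have f1 := g2 i1 (by omega) (by omega)
        have f2 := g2 i2 (by omega) (by omega)
        have f3 := g2 i3 (by omega) (by omega)
        have f4 := g2 i4 (by omega) (by omega)
        constructor <;> (rintro ⟨a, b, c⟩) <;> omega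
      · -- all in second block
        have e1 : k + (i1 - k) = i1 := by omega
        have e2 : k + (i2 - k) = i2 := by omega
        have e3 : k + (i3 - k) = i3 := by omega
        have e4 : k + (i4 - k) = i4 := by omega
        have hs := sep2 (i1 - k) (i2 - k) (i3 - k) (i4 - k)
          (by omega) (by omega) (by omega) (by omega) (by omega)
        simp only [e1, e2, e3, e4] at hs
        exact hs
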